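/- Let ℓ, k, n be natural numbers with 1 ≤ ℓ ≤ k and let V be a ground set with |V| = n. If there exists a MAS function F from the multisets over V of cardinality at most k to ℝ^m, then m ≥ min(n − ℓ, ℓk + 2ℓ − ℓ²). -/

import Mathlib

/-- For `1 ≤ ℓ ≤ k` and a ground set `V` with `|V| = n`, if a MAS function
`F : P_{≤k}(V) → ℝ^m` exists, then `m ≥ min (n − ℓ) (ℓk + 2ℓ − ℓ²)`. -/
theorem stmt5 (l k n : ℕ) (hl : 1 ≤ l) (hlk : l ≤ k)
    (V : Type*) [Fintype V] (hV : Fintype.card V = n) (m : ℕ)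
    (hF : ∃ F : {S : Multiset V // Multiset.card S ≤ k} → Fin m → ℝ,
      (∀ S T, S.val ≤ T.val → F S ≤ F T) ∧
      (∀ S T, F S ≤ F T → S.val ≤ T.val)) :
    min (n - l) (l * k + 2 * l - l ^ 2) ≤ m := by
  classical
  obtain ⟨F, hmono, hsep⟩ := hF
  rcases le_or_gt (n - l) m with hnl | hnl
  · exact le_trans (min_le_left _ _) hnl
  obtain ⟨d, hk⟩ : ∃ d, k = l + d := ⟨k - l, by omega⟩
  subst hk
  have hk1 : 1 ≤ l + d := by omega
  set sing : V → {S : Multiset V // Multiset.card S ≤ l + d} :=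
    fun v => ⟨{v}, by simpa using hk1⟩ with hsing
  set f : Fin m → V → ℝ := fun i v => F (sing v) i with hfdef
  set P : Finset V := Finset.univ.filter (fun x => ∃ i, ∀ y, y ≠ x → f i y < f i x) with hP
  -- tops are at most m
  have hPcard : P.card ≤ m := by
    have hmR : (Finset.range m).card = m := Finset.card_range m
    rw [← hmR]
    apply Finset.card_le_card_of_injOn
      (fun x => if h : ∃ i, ∀ y, y ≠ x → f i y < f i x then (h.choose : Fin m).val else 0)
    · intro x hx
      have h : ∃ i, ∀ y, y ≠ x → f i y < f i x := (Finset.mem_filter.mp hx).2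
      simp only [dif_pos h]
      exact Finset.mem_range.mpr h.choose.isLt
    · intro x hx x' hx' hxx
      have h : ∃ i, ∀ y, y ≠ x → f i y < f i x := (Finset.mem_filter.mp hx).2
      have h' : ∃ i, ∀ y, y ≠ x' → f i y < f i x' := (Finset.mem_filter.mp hx').2
      simp only [dif_pos h, dif_pos h'] at hxx
      have hii : h.choose = h'.choose := Fin.val_injective hxx
      by_contra hne
      have h1 := h.choose_spec x' (fun e => hne e.symm)
      have h2 := h'.choose_spec x (fun e => hne e)
      rw [hii] at h1
      exact absurd h1 (not_lt.mpr (le_of_lt h2))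
  -- at least l non-top elements
  have hR : l ≤ (Finset.univ \ P).card := by
    have hd1 := Finset.card_sdiff_of_subset (Finset.subset_univ P)
    have hu : (Finset.univ : Finset V).card = n := by rw [Finset.card_univ, hV]
    omega
  obtain ⟨Y, hYsub, hYcard⟩ := Finset.exists_subset_card_eq hR
  set U : V → Finset (Fin m) :=
    fun x => Finset.univ.filter (fun i => ∀ y ∈ Y, y ≠ x → f i y < f i x) with hU
  -- each chosen non-top dominates the others in at least d+2 coordinates
  have claimA : ∀ x ∈ Y, d + 2 ≤ (U x).card := by
    intro x hx
    by_contra hA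
    push_neg at hA
    have hxP : x ∉ P := (Finset.mem_sdiff.mp (hYsub hx)).2
    have hnx : ∀ i : Fin m, ∃ y, y ≠ x ∧ f i x ≤ f i y := by
      have hno : ¬ ∃ i, ∀ y, y ≠ x → f i y < f i x := by
        intro hcon
        exact hxP (Finset.mem_filter.mpr ⟨Finset.mem_univ _, hcon⟩)
      push_neg at hno
      exact hno
    choose dfun hd1 hd2 using hnx
    set Sx : Finset V := (Y.erase x) ∪ (U x).image dfun with hSx
    have hScard : Sx.card ≤ l + d := by
      have h1 : Sx.card ≤ (Y.erase x).card + ((U x).image dfun).card :=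
        Finset.card_union_le _ _
      have h2 : (Y.erase x).card = l - 1 := by
        rw [Finset.card_erase_of_mem hx, hYcard]
      have h3 := Finset.card_image_le (f := dfun) (s := U x)
      omega
    have hxS : x ∉ Sx := by
      intro hmem
      rcases Finset.mem_union.mp hmem with hmem | hmem
      · exact (Finset.mem_erase.mp hmem).1 rfl
      · obtain ⟨i, _, hix⟩ := Finset.mem_image.mp hmem
        exact hd1 i hix
    set B : {S : Multiset V // Multiset.card S ≤ l + d} :=
      ⟨Sx.1, hScard⟩ with hB
    have hnle : ¬ ((sing x).val ≤ B.val) := by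
      intro hle
      have : x ∈ Sx.1 := Multiset.singleton_le.mp hle
      exact hxS this
    have hFn : ¬ (F (sing x) ≤ F B) := fun h => hnle (hsep _ _ h)
    obtain ⟨i, hi⟩ : ∃ i, F B i < F (sing x) i := by
      by_contra hcon
      push_neg at hcon
      exact hFn (fun i => hcon i)
    by_cases hiU : i ∈ U x
    · have hmem : dfun i ∈ Sx :=
        Finset.mem_union_right _ (Finset.mem_image.mpr ⟨i, hiU, rfl⟩)
      have h1 : F (sing (dfun i)) ≤ F B :=
        hmono _ _ (Multiset.singleton_le.mpr hmem)
      have h2 : f i (dfun i) < f i x := lt_of_le_of_lt (h1 i) hi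
      exact absurd (hd2 i) (not_le.mpr h2)
    · have hnall : ¬ ∀ y ∈ Y, y ≠ x → f i y < f i x := by
        intro hcon
        exact hiU (Finset.mem_filter.mpr ⟨Finset.mem_univ _, hcon⟩)
      push_neg at hnall
      obtain ⟨y, hyY, hyx, hyle⟩ := hnall
      have hmem : y ∈ Sx := Finset.mem_union_left _ (Finset.mem_erase.mpr ⟨hyx, hyY⟩)
      have h1 : F (sing y) ≤ F B :=
        hmono _ _ (Multiset.singleton_le.mpr hmem)
      have h2 : f i y < f i x := lt_of_le_of_lt (h1 i) hi
      exact absurd hyle (not_le.mpr h2)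
  -- the coordinate sets are pairwise disjoint
  have disj : ∀ x ∈ Y, ∀ x' ∈ Y, x ≠ x' → Disjoint (U x) (U x') := by
    intro x hx x' hx' hne
    rw [Finset.disjoint_left]
    intro i hiU hiU'
    have h1 := (Finset.mem_filter.mp hiU).2 x' hx' (fun e => hne e.symm)
    have h2 := (Finset.mem_filter.mp hiU').2 x hx hne
    exact absurd h1 (not_lt.mpr (le_of_lt h2))
  -- counting
  have hsum := Finset.card_nsmul_le_sum Y (fun x => (U x).card) (d + 2) claimA
  rw [← Finset.card_biUnion disj] at hsum
  have hfin : (Y.biUnion U).card ≤ m := by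
    have := Finset.card_le_univ (Y.biUnion U)
    simpa using this
  have hkey : l * (d + 2) ≤ m := by
    have h1 : Y.card • (d + 2) = l * (d + 2) := by rw [hYcard, smul_eq_mul]
    rw [h1] at hsum
    exact le_trans hsum hfin
  refine le_trans (min_le_right _ _) ?_
  have harr : l * (l + d) + 2 * l - l ^ 2 = l * (d + 2) := by
    have h2 : l * (l + d) + 2 * l = l ^ 2 + l * (d + 2) := by ring
    rw [h2, Nat.add_sub_cancel_left]
  rw [harr]
  exact hkey
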